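/- For every 0 ≤ n ≤ d, det(𝔈₀(𝒞) + 𝔈ₙ^♯(𝒞)) = det(𝔈₀(𝒞) − 𝔈ₙ^♯(𝒞)) = |C_{−L}|^{4(2d−n)} · D_n(𝒞)². In particular, the 8d×8d matrices 𝔈₀(𝒞) ± 𝔈ₙ^♯(𝒞) are invertible if and only if D_n(𝒞) ≠ 0. -/

import Mathlib

open Complex Matrix

noncomputable section

def Lv (d : ℕ) : ℤ := if Even d then d / 2 else d

def rv (d : ℕ) : ℤ := if Even d then 1 else 2

/-- The coefficient of `T^k` in `f_𝒞(T) = Σ_{j=0}^d C_{-(L-rj)} T^{d-j}` is `C_{L-rk}`. -/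
def coeffC (d : ℕ) (C : ℤ → ℂ) : ℕ → ℂ := fun k => C (Lv d - rv d * k)

def SCM (a : ℕ → ℂ) (d n : ℕ) : Matrix (Fin n) (Fin n) ℂ :=
  Matrix.of fun j k => if (j : ℕ) ≤ (k : ℕ) then a (d - ((k : ℕ) - (j : ℕ))) else 0

def SCN (a : ℕ → ℂ) (n : ℕ) : Matrix (Fin n) (Fin n) ℂ :=
  Matrix.of fun j k => if (j : ℕ) ≤ (k : ℕ) then a ((k : ℕ) - (j : ℕ)) else 0

def SCL (a : ℕ → ℂ) (d n : ℕ) (ε : ℂ) : Matrix (Fin n ⊕ Fin n) (Fin n ⊕ Fin n) ℂ :=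
  Matrix.fromBlocks (SCM a d n)ᵀ (ε • (SCN a n)ᴴ) (ε • SCN a n)
    ((SCM a d n).map (starRingEnd ℂ))

/-- The Schur–Cohn determinant `D_n(𝒞)`, with `D_0(𝒞) = 1`. -/
def SCD (d : ℕ) (C : ℤ → ℂ) (n : ℕ) : ℂ :=
  if n = 0 then 1 else (SCL (coeffC d C) d n 1).det

/-- The `2d × 2d` lower-triangular Toeplitz matrix `𝔢₀(𝒞)` with `(j,k)`-entry
`C_{−L+r(j−k)}` when `0 ≤ j−k ≤ d` and `0` otherwise. -/
def e0mat (d : ℕ) (C : ℤ → ℂ) : Matrix (Fin (2 * d)) (Fin (2 * d)) ℂ :=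
  Matrix.of fun j k =>
    if (k : ℕ) ≤ (j : ℕ) ∧ (j : ℕ) - (k : ℕ) ≤ d then
      C (-(Lv d) + rv d * ((j : ℕ) - (k : ℕ) : ℕ)) else 0

/-- The `2d × 2d` matrix `𝔢_{1,n}(𝒞)` whose only nonzero entries are the
`(m+j, d+m)`-entries (1-based), equal to `C_{L−rj}`, for `1 ≤ m ≤ n`, `0 ≤ j ≤ d`. -/
def e1mat (d n : ℕ) (C : ℤ → ℂ) : Matrix (Fin (2 * d)) (Fin (2 * d)) ℂ :=
  Matrix.of fun j k =>
    if d ≤ (k : ℕ) ∧ (k : ℕ) + 1 ≤ d + n ∧ (k : ℕ) ≤ (j : ℕ) + d ∧ (j : ℕ) ≤ (k : ℕ) then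
      C (Lv d - rv d * ((j : ℤ) - (k : ℤ) + d)) else 0

/-- The `2d × 2d` matrix `𝔢_{2,n}(𝒞)` whose only nonzero entries are the
`(d−n+m+j, 2d−n+m)`-entries (1-based), equal to `C_{L−rj}`, for `1 ≤ m ≤ n`, `0 ≤ j ≤ d`. -/
def e2mat (d n : ℕ) (C : ℤ → ℂ) : Matrix (Fin (2 * d)) (Fin (2 * d)) ℂ :=
  Matrix.of fun j k =>
    if 2 * d ≤ (k : ℕ) + n ∧ (k : ℕ) ≤ (j : ℕ) + d ∧ (j : ℕ) ≤ (k : ℕ) then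
      C (Lv d - rv d * ((j : ℤ) - (k : ℤ) + d)) else 0

/-- The `2d × 2d` anti-diagonal matrix `J_{2d}`. -/
def Jmat (d : ℕ) : Matrix (Fin (2 * d)) (Fin (2 * d)) ℂ :=
  Matrix.of fun j k => if (j : ℕ) + (k : ℕ) + 1 = 2 * d then 1 else 0

/-- The `8d × 8d` matrix `𝔈₀(𝒞) = blockdiag(𝔢₀, 𝔢₀, ᵗconj(𝔢₀), ᵗconj(𝔢₀))`, indexed by
`Fin 4 × Fin (2d)` (the first coordinate is the block index). -/
def bigE0 (d : ℕ) (C : ℤ → ℂ) :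
    Matrix (Fin 4 × Fin (2 * d)) (Fin 4 × Fin (2 * d)) ℂ :=
  Matrix.of fun p q =>
    if p.1 = q.1 then
      (if (p.1 : ℕ) ≤ 1 then e0mat d C p.2 q.2 else (e0mat d C)ᴴ p.2 q.2)
    else 0

/-- The `8d × 8d` matrix `𝔈ₙ^♯(𝒞)` with `(1,3)`-block `conj(𝔢_{2,n})`, `(2,4)`-block
`conj(𝔢_{1,n})`, `(3,1)`-block `J_{2d}·𝔢_{1,n}·J_{2d}`, `(4,2)`-block `J_{2d}·𝔢_{2,n}·J_{2d}`,
and all other blocks zero. -/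
def bigEsharp (d n : ℕ) (C : ℤ → ℂ) :
    Matrix (Fin 4 × Fin (2 * d)) (Fin 4 × Fin (2 * d)) ℂ :=
  Matrix.of fun p q =>
    if p.1 = 0 ∧ q.1 = 2 then ((e2mat d n C).map (starRingEnd ℂ)) p.2 q.2
    else if p.1 = 1 ∧ q.1 = 3 then ((e1mat d n C).map (starRingEnd ℂ)) p.2 q.2
    else if p.1 = 2 ∧ q.1 = 0 then (Jmat d * e1mat d n C * Jmat d) p.2 q.2
    else if p.1 = 3 ∧ q.1 = 1 then (Jmat d * e2mat d n C * Jmat d) p.2 q.2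
    else 0

/-- The vector `χ ∈ ℂ^{8d}` with first and last entries `1` and all other entries `0`. -/
def chiVec (d : ℕ) : Fin 4 × Fin (2 * d) → ℂ := fun p =>
  if (p.1 = 0 ∧ (p.2 : ℕ) = 0) ∨ (p.1 = 3 ∧ (p.2 : ℕ) + 1 = 2 * d) then 1 else 0

/-- The `8d × 8d` matrix `𝔍 = [[0, I_{4d}],[I_{4d}, 0]]` (swapping blocks `0 ↔ 2`, `1 ↔ 3`). -/
def bigJ (d : ℕ) : Matrix (Fin 4 × Fin (2 * d)) (Fin 4 × Fin (2 * d)) ℂ :=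
  Matrix.of fun p q => if ((p.1 : ℕ) + 2) % 4 = (q.1 : ℕ) ∧ p.2 = q.2 then 1 else 0


namespace SchurAux
open Finset

/-- Lower triangular Toeplitz matrix with symbol `g`. -/
def LTm (m : ℕ) (g : ℕ → ℂ) : Matrix (Fin m) (Fin m) ℂ :=
  Matrix.of fun j k => if (k : ℕ) ≤ (j : ℕ) then g ((j : ℕ) - (k : ℕ)) else 0

lemma LTm_apply {m : ℕ} (g : ℕ → ℂ) (j k : Fin m) :
    LTm m g j k = if (k : ℕ) ≤ (j : ℕ) then g ((j : ℕ) - (k : ℕ)) else 0 := rfl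

lemma LTm_conjT_apply {m : ℕ} (g : ℕ → ℂ) (j k : Fin m) :
    (LTm m g)ᴴ j k = if (j : ℕ) ≤ (k : ℕ) then star (g ((k : ℕ) - (j : ℕ))) else 0 := by
  simp only [Matrix.conjTranspose_apply, LTm_apply, apply_ite star, star_zero]

lemma LTm_mul (m : ℕ) (g h : ℕ → ℂ) :
    LTm m g * LTm m h
      = LTm m (fun t => ∑ x ∈ Finset.range (t + 1), g x * h (t - x)) := by
  ext j k
  rw [Matrix.mul_apply, LTm_apply]
  have hterm : ∀ p : Fin m, LTm m g j p * LTm m h p k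
      = (fun pv => (if pv ≤ (j : ℕ) then g ((j : ℕ) - pv) else 0) *
          (if (k : ℕ) ≤ pv then h (pv - (k : ℕ)) else 0)) (p : ℕ) := fun p => rfl
  rw [Finset.sum_congr rfl (fun p _ => hterm p),
    Fin.sum_univ_eq_sum_range (fun pv => (if pv ≤ (j : ℕ) then g ((j : ℕ) - pv) else 0) *
      (if (k : ℕ) ≤ pv then h (pv - (k : ℕ)) else 0)) m]
  by_cases hjk : (k : ℕ) ≤ (j : ℕ)
  · rw [if_pos hjk]
    set t := (j : ℕ) - (k : ℕ) with ht
    have hsub : (Finset.range (t + 1)).image (fun x => (j : ℕ) - x) ⊆ Finset.range m := by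
      intro p hp
      simp only [Finset.mem_image, Finset.mem_range] at hp ⊢
      obtain ⟨x, _, rfl⟩ := hp
      omega
    have hzero : ∀ p ∈ Finset.range m,
        p ∉ (Finset.range (t + 1)).image (fun x => (j : ℕ) - x) →
        (if p ≤ (j : ℕ) then g ((j : ℕ) - p) else 0) *
          (if (k : ℕ) ≤ p then h (p - (k : ℕ)) else 0) = 0 := by
      intro p _ hp
      simp only [Finset.mem_image, Finset.mem_range, not_exists, not_and] at hp
      by_cases h1 : p ≤ (j : ℕ)
      · by_cases h2 : (k : ℕ) ≤ p
        · exact ((hp ((j : ℕ) - p) (by omega)) (by omega)).elim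
        · rw [if_neg h2, mul_zero]
      · rw [if_neg h1, zero_mul]
    rw [← Finset.sum_subset hsub hzero,
      Finset.sum_image (by intro x hx y hy hxy; simp only [Finset.mem_coe, Finset.mem_range] at hx hy; beta_reduce at hxy; omega)]
    apply Finset.sum_congr rfl
    intro x hx
    simp only [Finset.mem_range] at hx
    rw [if_pos (by omega), if_pos (by omega)]
    congr 1
    · congr 1; omega
    · congr 1; omega
  · rw [if_neg hjk]
    apply Finset.sum_eq_zero
    intro p _
    by_cases h1 : (p : ℕ) ≤ (j : ℕ)
    · rw [if_neg (show ¬ (k : ℕ) ≤ (p : ℕ) by omega), mul_zero]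
    · rw [if_neg h1, zero_mul]

lemma LTm_delta (m : ℕ) : LTm m (fun t => if t = 0 then 1 else 0) = 1 := by
  ext j k
  rw [LTm_apply]
  by_cases h : (k : ℕ) ≤ (j : ℕ)
  · rw [if_pos h]
    by_cases h2 : j = k
    · subst h2; simp [Matrix.one_apply]
    · rw [if_neg (by simp only [Fin.ext_iff] at h2; omega), Matrix.one_apply_ne h2]
  · rw [if_neg h, eq_comm, Matrix.one_apply_ne (by intro hjk; subst hjk; omega)]

/-- Coefficients of the power series inverse. -/
def vc (c : ℕ → ℂ) : ℕ → ℂ :=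
  fun t => PowerSeries.coeff t (PowerSeries.mk c)⁻¹

lemma conv_c_vc (c : ℕ → ℂ) (hc : c 0 ≠ 0) (t : ℕ) :
    (∑ x ∈ Finset.range (t + 1), c x * vc c (t - x)) = if t = 0 then 1 else 0 := by
  have h0 : PowerSeries.constantCoeff (PowerSeries.mk c) ≠ 0 := by
    simpa [PowerSeries.constantCoeff_mk] using hc
  have h := PowerSeries.mul_inv_cancel (PowerSeries.mk c) h0
  have h2 := congrArg (PowerSeries.coeff t) h
  rw [PowerSeries.coeff_mul, Finset.Nat.sum_antidiagonal_eq_sum_range_succ_mk] at h2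
  simpa [vc, PowerSeries.coeff_mk, PowerSeries.coeff_one] using h2

lemma conv_vc_c (c : ℕ → ℂ) (hc : c 0 ≠ 0) (t : ℕ) :
    (∑ x ∈ Finset.range (t + 1), vc c x * c (t - x)) = if t = 0 then 1 else 0 := by
  rw [← Finset.sum_range_reflect]
  rw [← conv_c_vc c hc t]
  apply Finset.sum_congr rfl
  intro x hx
  simp only [Finset.mem_range] at hx
  rw [mul_comm]
  congr 1 <;> · congr 1; omega

lemma LTm_mul_vc (m : ℕ) (c : ℕ → ℂ) (hc : c 0 ≠ 0) :
    LTm m c * LTm m (vc c) = 1 := by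
  rw [LTm_mul, show (fun t => ∑ x ∈ Finset.range (t + 1), c x * vc c (t - x))
    = (fun t : ℕ => if t = 0 then (1:ℂ) else 0) from funext fun t => conv_c_vc c hc t,
    LTm_delta]

lemma vc_mul_LTm (m : ℕ) (c : ℕ → ℂ) (hc : c 0 ≠ 0) :
    LTm m (vc c) * LTm m c = 1 := by
  rw [LTm_mul, show (fun t => ∑ x ∈ Finset.range (t + 1), vc c x * c (t - x))
    = (fun t : ℕ => if t = 0 then (1:ℂ) else 0) from funext fun t => conv_vc_c c hc t,
    LTm_delta]

lemma det_LTm (m : ℕ) (c : ℕ → ℂ) : (LTm m c).det = (c 0) ^ m := by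
  rw [Matrix.det_of_lowerTriangular _ (fun i j hij => by
    have hij' : (i : ℕ) < (j : ℕ) := OrderDual.toDual_lt_toDual.mp hij
    rw [LTm_apply, if_neg (by omega)])]
  · simp only [LTm_apply, le_refl, if_pos, Nat.sub_self]
    rw [Finset.prod_const, Finset.card_univ, Fintype.card_fin]

/-- Column-restriction of a matrix to columns `[s0, s0+n)`. -/
def XR (m n s0 : ℕ) (M : Matrix (Fin m) (Fin m) ℂ) : Matrix (Fin m) (Fin m) ℂ :=
  Matrix.of fun j k => if s0 ≤ (k : ℕ) ∧ (k : ℕ) < s0 + n then M j k else 0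

lemma XR_apply (m n s0 : ℕ) (M : Matrix (Fin m) (Fin m) ℂ) (j k : Fin m) :
    XR m n s0 M j k = if s0 ≤ (k : ℕ) ∧ (k : ℕ) < s0 + n then M j k else 0 := rfl

/-- The inclusion `Fin n → Fin m` with offset `s0`. -/
def ιf (m n s0 : ℕ) (h : s0 + n ≤ m) : Fin n → Fin m := fun i => ⟨s0 + i, by omega⟩

lemma sel_col (m n s0 : ℕ) (h : s0 + n ≤ m) (M : Matrix (Fin m) (Fin m) ℂ) :
    (M.submatrix id (ιf m n s0 h)) *
      ((1 : Matrix (Fin m) (Fin m) ℂ).submatrix (ιf m n s0 h) id) = XR m n s0 M := by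
  ext j k
  rw [Matrix.mul_apply, XR_apply]
  by_cases hk : s0 ≤ (k : ℕ) ∧ (k : ℕ) < s0 + n
  · rw [if_pos hk]
    rw [Finset.sum_eq_single (⟨(k : ℕ) - s0, by omega⟩ : Fin n)]
    · have he : ιf m n s0 h ⟨(k : ℕ) - s0, by omega⟩ = k := by
        apply Fin.ext; show s0 + ((k : ℕ) - s0) = (k : ℕ); omega
      simp [Matrix.one_apply, he]
    · intro b _ hb
      have hne : ιf m n s0 h b ≠ k := by
        intro hcon
        apply hb
        have : s0 + (b : ℕ) = (k : ℕ) := congrArg Fin.val hcon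
        apply Fin.ext; show (b : ℕ) = (k : ℕ) - s0; omega
      exact mul_eq_zero_of_right _ (Matrix.one_apply_ne hne)
    · simp
  · rw [if_neg hk]
    apply Finset.sum_eq_zero
    intro b _
    have hne : ιf m n s0 h b ≠ k := by
      intro hcon
      have : s0 + (b : ℕ) = (k : ℕ) := congrArg Fin.val hcon
      have hbn := b.isLt
      omega
    exact mul_eq_zero_of_right _ (Matrix.one_apply_ne hne)

lemma rowsel_mul (m n s0 : ℕ) (h : s0 + n ≤ m) (M : Matrix (Fin m) (Fin m) ℂ) :
    ((1 : Matrix (Fin m) (Fin m) ℂ).submatrix (ιf m n s0 h) id) * M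
      = M.submatrix (ιf m n s0 h) id := by
  ext i k
  rw [Matrix.mul_apply, Matrix.submatrix_apply]
  rw [Finset.sum_eq_single (ιf m n s0 h i)]
  · simp [Matrix.one_apply]
  · intro b _ hb
    exact mul_eq_zero_of_left (Matrix.one_apply_ne (Ne.symm hb)) _
  · simp

lemma submul_sub (m n p : ℕ) (ι₁ : Fin n → Fin m) (ι₂ : Fin p → Fin m)
    (M N : Matrix (Fin m) (Fin m) ℂ) :
    (M.submatrix ι₁ id) * (N.submatrix id ι₂) = (M * N).submatrix ι₁ ι₂ := by
  ext i k
  simp [Matrix.mul_apply, Matrix.submatrix_apply]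

/-- Generic block-determinant formula. -/
lemma det_blocks (m : ℕ) (c : ℕ → ℂ) (hc : c 0 ≠ 0) (X Y : Matrix (Fin m) (Fin m) ℂ)
    (ε : ℂ) (hε : ε * ε = 1) :
    (Matrix.fromBlocks (LTm m c) (ε • X) (ε • Y) (LTm m c)ᴴ).det
      = (c 0 * star (c 0)) ^ m *
        ((1 : Matrix (Fin m) (Fin m) ℂ)
          - (LTm m (vc c))ᴴ * Y * (LTm m (vc c) * X)).det := by
  have hTV := LTm_mul_vc m c hc
  have hVT := vc_mul_LTm m c hc
  have hTVc : (LTm m c)ᴴ * (LTm m (vc c))ᴴ = 1 := by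
    rw [← Matrix.conjTranspose_mul, hVT, Matrix.conjTranspose_one]
  have hfac : Matrix.fromBlocks (LTm m c) (ε • X) (ε • Y) (LTm m c)ᴴ
      = Matrix.fromBlocks (LTm m c) 0 0 (LTm m c)ᴴ *
        Matrix.fromBlocks 1 (ε • (LTm m (vc c) * X)) (ε • ((LTm m (vc c))ᴴ * Y)) 1 := by
    rw [Matrix.fromBlocks_multiply]
    simp only [Matrix.mul_one, Matrix.zero_mul, add_zero, zero_add, Matrix.mul_smul,
      ← Matrix.mul_assoc, hTV, hTVc, Matrix.one_mul, smul_zero, Matrix.mul_zero]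
  rw [hfac, Matrix.det_mul, Matrix.det_fromBlocks_zero₂₁, Matrix.det_fromBlocks_one₁₁,
    det_LTm, Matrix.det_conjTranspose, det_LTm]
  have hsm : (ε • ((LTm m (vc c))ᴴ * Y)) * (ε • (LTm m (vc c) * X))
      = (LTm m (vc c))ᴴ * Y * (LTm m (vc c) * X) := by
    rw [Matrix.smul_mul, Matrix.mul_smul, smul_smul, hε, one_smul]
  rw [hsm, star_pow, ← mul_pow]


def cF (d : ℕ) (a : ℕ → ℂ) : ℕ → ℂ := fun t => if t ≤ d then a (d - t) else 0

lemma keyA (d n s : ℕ) (hn : n ≤ d) (hs : s + n ≤ d) (a : ℕ → ℂ)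
    (h2 : s + n ≤ 2*d) (h1 : (s+d) + n ≤ 2*d) :
    ((LTm (2*d) (vc (cF d a)) * (LTm (2*d) (cF d a))ᴴ).submatrix
        (ιf (2*d) n s h2) (ιf (2*d) n (s+d) h1))
      = LTm n (vc (cF d a)) * ((SCN a n)ᴴ) := by
  ext i i'
  rw [Matrix.submatrix_apply, Matrix.mul_apply, Matrix.mul_apply]
  have hL : ∀ j : Fin (2*d), LTm (2*d) (vc (cF d a)) (ιf (2*d) n s h2 i) j
        * (LTm (2*d) (cF d a))ᴴ j (ιf (2*d) n (s+d) h1 i')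
      = (fun jv => (if jv ≤ s + (i:ℕ) then vc (cF d a) (s + (i:ℕ) - jv) else 0)
          * (if jv ≤ s + d + (i':ℕ) then star (cF d a (s + d + (i':ℕ) - jv)) else 0)) (j : ℕ) := by
    intro j
    rw [LTm_apply, LTm_conjT_apply]
    rfl
  have hR : ∀ p : Fin n, LTm n (vc (cF d a)) i p * (SCN a n)ᴴ p i'
      = (fun pv => (if pv ≤ (i:ℕ) then vc (cF d a) ((i:ℕ) - pv) else 0)
          * (if (i':ℕ) ≤ pv then star (a (pv - (i':ℕ))) else 0)) (p:ℕ) := by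
    intro p
    rw [LTm_apply, Matrix.conjTranspose_apply]
    congr 1
    simp only [SCN, Matrix.of_apply, apply_ite star, star_zero]
  rw [Finset.sum_congr rfl (fun j _ => hL j),
    Fin.sum_univ_eq_sum_range (fun jv => (if jv ≤ s + (i:ℕ) then vc (cF d a) (s + (i:ℕ) - jv) else 0)
      * (if jv ≤ s + d + (i':ℕ) then star (cF d a (s + d + (i':ℕ) - jv)) else 0)) (2*d),
    Finset.sum_congr rfl (fun p _ => hR p),
    Fin.sum_univ_eq_sum_range (fun pv => (if pv ≤ (i:ℕ) then vc (cF d a) ((i:ℕ) - pv) else 0)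
      * (if (i':ℕ) ≤ pv then star (a (pv - (i':ℕ))) else 0)) n]
  have hii := i.isLt
  have hii' := i'.isLt
  have hsub : (Finset.range n).image (fun p => s + p) ⊆ Finset.range (2*d) := by
    intro x hx
    simp only [Finset.mem_image, Finset.mem_range] at hx ⊢
    obtain ⟨p, hp, rfl⟩ := hx; omega
  have hvan : ∀ jv ∈ Finset.range (2*d), jv ∉ (Finset.range n).image (fun p => s + p) →
      (if jv ≤ s + (i:ℕ) then vc (cF d a) (s + (i:ℕ) - jv) else 0)
        * (if jv ≤ s + d + (i':ℕ) then star (cF d a (s + d + (i':ℕ) - jv)) else 0) = 0 := by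
    intro jv _ hjv
    simp only [Finset.mem_image, Finset.mem_range, not_exists, not_and] at hjv
    have hcase : jv < s ∨ s + n ≤ jv := by
      by_contra hcon
      exact hjv (jv - s) (by omega) (by omega)
    rcases hcase with hlt | hge
    · apply mul_eq_zero_of_right
      rw [if_pos (by omega)]
      simp only [cF, if_neg (show ¬ (s + d + (i':ℕ) - jv ≤ d) by omega), star_zero]
    · apply mul_eq_zero_of_left
      rw [if_neg (by omega)]
  rw [← Finset.sum_subset hsub hvan,
    Finset.sum_image (by intro x _ y _ hxy; beta_reduce at hxy; omega)]
  apply Finset.sum_congr rfl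
  intro p hp
  simp only [Finset.mem_range] at hp
  congr 1
  · by_cases hc : p ≤ (i:ℕ)
    · rw [if_pos (by omega), if_pos hc]
      congr 1; omega
    · rw [if_neg (by omega), if_neg hc]
  · rw [if_pos (by omega)]
    by_cases hc : (i':ℕ) ≤ p
    · rw [if_pos hc]
      simp only [cF, if_pos (show s + d + (i':ℕ) - (s + p) ≤ d by omega)]
      congr 2; omega
    · rw [if_neg hc]
      simp only [cF, if_neg (show ¬ (s + d + (i':ℕ) - (s + p) ≤ d) by omega), star_zero]

lemma keyB (d n s : ℕ) (hn : n ≤ d) (hs : s + n ≤ d) (a : ℕ → ℂ)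
    (h2 : s + n ≤ 2*d) (h1 : (s+d) + n ≤ 2*d) :
    (((LTm (2*d) (vc (cF d a)))ᴴ * LTm (2*d) (cF d a)).submatrix
        (ιf (2*d) n (s+d) h1) (ιf (2*d) n s h2))
      = (LTm n (vc (cF d a)))ᴴ * SCN a n := by
  ext i' i
  rw [Matrix.submatrix_apply, Matrix.mul_apply, Matrix.mul_apply]
  have hL : ∀ j : Fin (2*d), (LTm (2*d) (vc (cF d a)))ᴴ (ιf (2*d) n (s+d) h1 i') j
        * LTm (2*d) (cF d a) j (ιf (2*d) n s h2 i)
      = (fun jv => (if s + d + (i':ℕ) ≤ jv then star (vc (cF d a) (jv - (s + d + (i':ℕ)))) else 0)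
          * (if s + (i:ℕ) ≤ jv then cF d a (jv - (s + (i:ℕ))) else 0)) (j : ℕ) := by
    intro j
    rw [LTm_apply, LTm_conjT_apply]
    rfl
  have hR : ∀ p : Fin n, (LTm n (vc (cF d a)))ᴴ i' p * SCN a n p i
      = (fun pv => (if (i':ℕ) ≤ pv then star (vc (cF d a) (pv - (i':ℕ))) else 0)
          * (if pv ≤ (i:ℕ) then a ((i:ℕ) - pv) else 0)) (p:ℕ) := by
    intro p
    rw [LTm_conjT_apply]
    rfl
  rw [Finset.sum_congr rfl (fun j _ => hL j),
    Fin.sum_univ_eq_sum_range (fun jv =>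
      (if s + d + (i':ℕ) ≤ jv then star (vc (cF d a) (jv - (s + d + (i':ℕ)))) else 0)
        * (if s + (i:ℕ) ≤ jv then cF d a (jv - (s + (i:ℕ))) else 0)) (2*d),
    Finset.sum_congr rfl (fun p _ => hR p),
    Fin.sum_univ_eq_sum_range (fun pv =>
      (if (i':ℕ) ≤ pv then star (vc (cF d a) (pv - (i':ℕ))) else 0)
        * (if pv ≤ (i:ℕ) then a ((i:ℕ) - pv) else 0)) n]
  have hii := i.isLt
  have hii' := i'.isLt
  have hsub : (Finset.range n).image (fun p => s + d + p) ⊆ Finset.range (2*d) := by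
    intro x hx
    simp only [Finset.mem_image, Finset.mem_range] at hx ⊢
    obtain ⟨p, hp, rfl⟩ := hx; omega
  have hvan : ∀ jv ∈ Finset.range (2*d), jv ∉ (Finset.range n).image (fun p => s + d + p) →
      (if s + d + (i':ℕ) ≤ jv then star (vc (cF d a) (jv - (s + d + (i':ℕ)))) else 0)
        * (if s + (i:ℕ) ≤ jv then cF d a (jv - (s + (i:ℕ))) else 0) = 0 := by
    intro jv _ hjv
    simp only [Finset.mem_image, Finset.mem_range, not_exists, not_and] at hjv
    have hcase : jv < s + d ∨ s + d + n ≤ jv := by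
      by_contra hcon
      exact hjv (jv - (s + d)) (by omega) (by omega)
    rcases hcase with hlt | hge
    · apply mul_eq_zero_of_left
      rw [if_neg (by omega)]
    · apply mul_eq_zero_of_right
      rw [if_pos (by omega)]
      simp only [cF, if_neg (show ¬ (jv - (s + (i:ℕ)) ≤ d) by omega)]
  rw [← Finset.sum_subset hsub hvan,
    Finset.sum_image (by intro x _ y _ hxy; beta_reduce at hxy; omega)]
  apply Finset.sum_congr rfl
  intro p hp
  simp only [Finset.mem_range] at hp
  congr 1
  · by_cases hc : (i':ℕ) ≤ p
    · rw [if_pos (by omega), if_pos hc]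
      congr 2; omega
    · rw [if_neg (by omega), if_neg hc]
  · rw [if_pos (by omega)]
    by_cases hc : p ≤ (i:ℕ)
    · rw [if_pos hc]
      simp only [cF, if_pos (show s + d + p - (s + (i:ℕ)) ≤ d by omega)]
      congr 1; omega
    · rw [if_neg hc]
      simp only [cF, if_neg (show ¬ (s + d + p - (s + (i:ℕ)) ≤ d) by omega)]


lemma mul_subcol {m p : ℕ} (M N : Matrix (Fin m) (Fin m) ℂ) (ι : Fin p → Fin m) :
    M * (N.submatrix id ι) = (M * N).submatrix id ι := by
  ext j i
  simp [Matrix.mul_apply]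

lemma det_one_sub_mul_comm {p q : ℕ} (A : Matrix (Fin p) (Fin q) ℂ)
    (B : Matrix (Fin q) (Fin p) ℂ) :
    (1 - A * B).det = (1 - B * A).det := by
  have h := Matrix.det_one_add_mul_comm (-A) B
  rwa [Matrix.neg_mul, ← sub_eq_add_neg, Matrix.mul_neg, ← sub_eq_add_neg] at h

lemma det_reduce_gen {M N : ℕ} (V W : Matrix (Fin M) (Fin M) ℂ)
    (cE cG : Matrix (Fin M) (Fin N) ℂ) (rE rG : Matrix (Fin N) (Fin M) ℂ) :
    (1 - W * (cG * rG) * (V * (cE * rE))).det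
      = (1 - (rG * V * cE) * (rE * W * cG)).det := by
  rw [show W * (cG * rG) * (V * (cE * rE)) = (W * cG) * (rG * (V * (cE * rE))) from by
      simp only [Matrix.mul_assoc]]
  rw [det_one_sub_mul_comm]
  congr 2
  simp only [Matrix.mul_assoc]

lemma core (d n : ℕ) (hn : n ≤ d) (a : ℕ → ℂ) (ha : a d ≠ 0) (s : ℕ) (hs : s + n ≤ d)
    (ε : ℂ) (hε : ε * ε = 1) :
    (Matrix.fromBlocks (LTm (2*d) (cF d a))
        (ε • XR (2*d) n (s+d) (LTm (2*d) (cF d a))ᴴ)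
        (ε • XR (2*d) n s (LTm (2*d) (cF d a)))
        (LTm (2*d) (cF d a))ᴴ).det
      = (a d * star (a d)) ^ (2*d - n) *
        (Matrix.fromBlocks (LTm n (cF d a)) ((SCN a n)ᴴ) (SCN a n)
          (LTm n (cF d a))ᴴ).det := by
  have hc0 : cF d a 0 = a d := by simp [cF]
  have hc : cF d a 0 ≠ 0 := by rw [hc0]; exact ha
  have h2 : s + n ≤ 2*d := by omega
  have h1 : (s+d) + n ≤ 2*d := by omega
  have hsmall := det_blocks n (cF d a) hc ((SCN a n)ᴴ) (SCN a n) 1 (by norm_num)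
  rw [one_smul, one_smul] at hsmall
  rw [det_blocks (2*d) (cF d a) hc _ _ ε hε]
  have hred : ((1 : Matrix (Fin (2*d)) (Fin (2*d)) ℂ)
        - (LTm (2*d) (vc (cF d a)))ᴴ * XR (2*d) n s (LTm (2*d) (cF d a))
          * (LTm (2*d) (vc (cF d a)) * XR (2*d) n (s+d) (LTm (2*d) (cF d a))ᴴ)).det
      = ((1 : Matrix (Fin n) (Fin n) ℂ)
          - (LTm n (vc (cF d a)))ᴴ * SCN a n * (LTm n (vc (cF d a)) * (SCN a n)ᴴ)).det := by
    rw [← sel_col (2*d) n (s+d) h1 ((LTm (2*d) (cF d a))ᴴ),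
        ← sel_col (2*d) n s h2 (LTm (2*d) (cF d a)),
        det_reduce_gen (LTm (2*d) (vc (cF d a))) ((LTm (2*d) (vc (cF d a))))ᴴ _ _ _ _,
        rowsel_mul (2*d) n s h2, rowsel_mul (2*d) n (s+d) h1,
        submul_sub _ _ _ _ _ ((LTm (2*d) (vc (cF d a)))) ((LTm (2*d) (cF d a))ᴴ),
        submul_sub _ _ _ _ _ ((LTm (2*d) (vc (cF d a)))ᴴ) ((LTm (2*d) (cF d a))),
        keyA d n s hn hs a h2 h1, keyB d n s hn hs a h2 h1,
        det_one_sub_mul_comm]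
  rw [hred, hsmall, hc0]
  conv_lhs => rw [show (2*d) = 2*d - n + n from by omega]
  rw [pow_add]
  ring


lemma rv_mul_d (d : ℕ) : rv d * (d : ℤ) = 2 * Lv d := by
  unfold rv Lv
  by_cases h : Even d
  · rw [if_pos h, if_pos h, one_mul]
    obtain ⟨k, hk⟩ := h
    subst hk
    have h1 : ((k + k : ℕ) : ℤ) = 2 * (k : ℤ) := by push_cast; ring
    rw [h1, Int.mul_ediv_cancel_left _ two_ne_zero]
  · rw [if_neg h, if_neg h]

lemma e0_eq (d : ℕ) (C : ℤ → ℂ) : e0mat d C = LTm (2*d) (cF d (coeffC d C)) := by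
  ext j k
  simp only [e0mat, Matrix.of_apply, LTm_apply, cF, coeffC]
  by_cases h : (k : ℕ) ≤ (j : ℕ) ∧ (j : ℕ) - (k : ℕ) ≤ d
  · rw [if_pos h, if_pos h.1, if_pos h.2]
    congr 1
    have hc : ((d - ((j : ℕ) - (k : ℕ)) : ℕ) : ℤ) = (d : ℤ) - (((j : ℕ) - (k : ℕ) : ℕ) : ℤ) := by
      omega
    rw [hc, mul_sub, rv_mul_d d]
    ring
  · rw [if_neg h]
    by_cases h1 : (k : ℕ) ≤ (j : ℕ)
    · rw [if_pos h1, if_neg (by omega)]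
    · rw [if_neg h1]

lemma Jmul (d : ℕ) (M : Matrix (Fin (2*d)) (Fin (2*d)) ℂ) (j k : Fin (2*d)) :
    (Jmat d * M) j k = M j.rev k := by
  rw [Matrix.mul_apply, Finset.sum_eq_single j.rev]
  · have hj := j.isLt
    have hrev : (j.rev : ℕ) = 2*d - ((j : ℕ) + 1) := rfl
    simp only [Jmat, Matrix.of_apply]
    rw [if_pos (by omega), one_mul]
  · intro b _ hb
    simp only [Jmat, Matrix.of_apply]
    rw [if_neg, zero_mul]
    intro hcon
    apply hb
    have hj := j.isLt
    have hbv := b.isLt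
    have hrev : (j.rev : ℕ) = 2*d - ((j : ℕ) + 1) := rfl
    apply Fin.ext
    omega
  · simp

lemma mulJ (d : ℕ) (M : Matrix (Fin (2*d)) (Fin (2*d)) ℂ) (j k : Fin (2*d)) :
    (M * Jmat d) j k = M j k.rev := by
  rw [Matrix.mul_apply, Finset.sum_eq_single k.rev]
  · have hk := k.isLt
    have hrev : (k.rev : ℕ) = 2*d - ((k : ℕ) + 1) := rfl
    simp only [Jmat, Matrix.of_apply]
    rw [if_pos (by omega), mul_one]
  · intro b _ hb
    simp only [Jmat, Matrix.of_apply]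
    rw [if_neg, mul_zero]
    intro hcon
    apply hb
    have hk := k.isLt
    have hbv := b.isLt
    have hrev : (k.rev : ℕ) = 2*d - ((k : ℕ) + 1) := rfl
    apply Fin.ext
    omega
  · simp

lemma JXJ (d : ℕ) (M : Matrix (Fin (2*d)) (Fin (2*d)) ℂ) (j k : Fin (2*d)) :
    (Jmat d * M * Jmat d) j k = M j.rev k.rev := by
  rw [mulJ, Jmul]

lemma e2c_eq (d n : ℕ) (C : ℤ → ℂ) (hn : n ≤ d) :
    (e2mat d n C).map (starRingEnd ℂ)
      = XR (2*d) n (d - n + d) (LTm (2*d) (cF d (coeffC d C)))ᴴ := by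
  ext j k
  simp only [e2mat, Matrix.of_apply, Matrix.map_apply, XR_apply, LTm_conjT_apply, cF, coeffC,
    Complex.star_def]
  have hj := j.isLt
  have hk := k.isLt
  by_cases h : 2*d ≤ (k : ℕ) + n ∧ (k : ℕ) ≤ (j : ℕ) + d ∧ (j : ℕ) ≤ (k : ℕ)
  · rw [if_pos h, if_pos (show d - n + d ≤ (k : ℕ) ∧ (k : ℕ) < d - n + d + n by omega),
      if_pos h.2.2, if_pos (show (k : ℕ) - (j : ℕ) ≤ d by omega)]
    have harg : Lv d - rv d * ((j : ℤ) - (k : ℤ) + (d : ℤ))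
        = Lv d - rv d * ((d - ((k : ℕ) - (j : ℕ)) : ℕ) : ℤ) := by
      have hc : ((d - ((k : ℕ) - (j : ℕ)) : ℕ) : ℤ) = (j : ℤ) - (k : ℤ) + (d : ℤ) := by omega
      rw [hc]
    rw [harg]
  · rw [if_neg h, map_zero]
    by_cases h1 : d - n + d ≤ (k : ℕ) ∧ (k : ℕ) < d - n + d + n
    · rw [if_pos h1]
      by_cases h2 : (j : ℕ) ≤ (k : ℕ)
      · rw [if_pos h2, if_neg (show ¬ ((k : ℕ) - (j : ℕ) ≤ d) by omega), map_zero]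
      · rw [if_neg h2]
    · rw [if_neg h1]

lemma e1c_eq (d n : ℕ) (C : ℤ → ℂ) (hn : n ≤ d) :
    (e1mat d n C).map (starRingEnd ℂ)
      = XR (2*d) n (0 + d) (LTm (2*d) (cF d (coeffC d C)))ᴴ := by
  ext j k
  simp only [e1mat, Matrix.of_apply, Matrix.map_apply, XR_apply, LTm_conjT_apply, cF, coeffC,
    Complex.star_def]
  have hj := j.isLt
  have hk := k.isLt
  by_cases h : d ≤ (k : ℕ) ∧ (k : ℕ) + 1 ≤ d + n ∧ (k : ℕ) ≤ (j : ℕ) + d ∧ (j : ℕ) ≤ (k : ℕ)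
  · rw [if_pos h, if_pos (show 0 + d ≤ (k : ℕ) ∧ (k : ℕ) < 0 + d + n by omega),
      if_pos h.2.2.2, if_pos (show (k : ℕ) - (j : ℕ) ≤ d by omega)]
    have harg : Lv d - rv d * ((j : ℤ) - (k : ℤ) + (d : ℤ))
        = Lv d - rv d * ((d - ((k : ℕ) - (j : ℕ)) : ℕ) : ℤ) := by
      have hc : ((d - ((k : ℕ) - (j : ℕ)) : ℕ) : ℤ) = (j : ℤ) - (k : ℤ) + (d : ℤ) := by omega
      rw [hc]
    rw [harg]
  · rw [if_neg h, map_zero]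
    by_cases h1 : 0 + d ≤ (k : ℕ) ∧ (k : ℕ) < 0 + d + n
    · rw [if_pos h1]
      by_cases h2 : (j : ℕ) ≤ (k : ℕ)
      · rw [if_pos h2, if_neg (show ¬ ((k : ℕ) - (j : ℕ) ≤ d) by omega), map_zero]
      · rw [if_neg h2]
    · rw [if_neg h1]

lemma Je1J_eq (d n : ℕ) (C : ℤ → ℂ) (hn : n ≤ d) :
    Jmat d * e1mat d n C * Jmat d
      = XR (2*d) n (d - n) (LTm (2*d) (cF d (coeffC d C))) := by
  ext j k
  rw [JXJ]
  simp only [e1mat, Matrix.of_apply, XR_apply, LTm_apply, cF, coeffC]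
  have hj := j.isLt
  have hk := k.isLt
  have hjr : (j.rev : ℕ) = 2*d - ((j : ℕ) + 1) := rfl
  have hkr : (k.rev : ℕ) = 2*d - ((k : ℕ) + 1) := rfl
  by_cases h : d - n ≤ (k : ℕ) ∧ (k : ℕ) < d - n + n ∧ (k : ℕ) ≤ (j : ℕ) ∧ (j : ℕ) - (k : ℕ) ≤ d
  · rw [if_pos (show d ≤ (k.rev : ℕ) ∧ (k.rev : ℕ) + 1 ≤ d + n ∧ (k.rev : ℕ) ≤ (j.rev : ℕ) + d
        ∧ (j.rev : ℕ) ≤ (k.rev : ℕ) by omega),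
      if_pos (show d - n ≤ (k : ℕ) ∧ (k : ℕ) < d - n + n by omega),
      if_pos h.2.2.1, if_pos h.2.2.2]
    congr 1
    have hc : ((d - ((j : ℕ) - (k : ℕ)) : ℕ) : ℤ)
        = ((j.rev : ℕ) : ℤ) - ((k.rev : ℕ) : ℤ) + (d : ℤ) := by omega
    rw [hc]
  · rw [if_neg (by omega)]
    split_ifs with h1 h2 h3
    · exact ((show False by omega)).elim
    · rfl
    · rfl
    · rfl

lemma Je2J_eq (d n : ℕ) (C : ℤ → ℂ) (hn : n ≤ d) :
    Jmat d * e2mat d n C * Jmat d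
      = XR (2*d) n 0 (LTm (2*d) (cF d (coeffC d C))) := by
  ext j k
  rw [JXJ]
  simp only [e2mat, Matrix.of_apply, XR_apply, LTm_apply, cF, coeffC]
  have hj := j.isLt
  have hk := k.isLt
  have hjr : (j.rev : ℕ) = 2*d - ((j : ℕ) + 1) := rfl
  have hkr : (k.rev : ℕ) = 2*d - ((k : ℕ) + 1) := rfl
  by_cases h : (k : ℕ) < n ∧ (k : ℕ) ≤ (j : ℕ) ∧ (j : ℕ) - (k : ℕ) ≤ d
  · rw [if_pos (show 2*d ≤ (k.rev : ℕ) + n ∧ (k.rev : ℕ) ≤ (j.rev : ℕ) + d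
        ∧ (j.rev : ℕ) ≤ (k.rev : ℕ) by omega),
      if_pos (show 0 ≤ (k : ℕ) ∧ (k : ℕ) < 0 + n by omega),
      if_pos h.2.1, if_pos h.2.2]
    congr 1
    have hc : ((d - ((j : ℕ) - (k : ℕ)) : ℕ) : ℤ)
        = ((j.rev : ℕ) : ℤ) - ((k.rev : ℕ) : ℤ) + (d : ℤ) := by omega
    rw [hc]
  · rw [if_neg (by omega)]
    split_ifs with h1 h2 h3
    · exact ((show False by omega)).elim
    · rfl
    · rfl
    · rfl

lemma SCL_eq (d n : ℕ) (hn : n ≤ d) (a : ℕ → ℂ) :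
    SCL a d n 1
      = Matrix.fromBlocks (LTm n (cF d a)) ((SCN a n)ᴴ) (SCN a n) (LTm n (cF d a))ᴴ := by
  unfold SCL
  rw [one_smul, one_smul]
  have h1 : (SCM a d n)ᵀ = LTm n (cF d a) := by
    ext j k
    simp only [SCM, Matrix.transpose_apply, Matrix.of_apply, LTm_apply, cF]
    have hj := j.isLt
    by_cases h : (k : ℕ) ≤ (j : ℕ)
    · rw [if_pos h, if_pos h, if_pos (by omega)]
    · rw [if_neg h, if_neg h]
  have h2 : (SCM a d n).map (starRingEnd ℂ) = (LTm n (cF d a))ᴴ := by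
    ext j k
    simp only [SCM, Matrix.map_apply, Matrix.of_apply, LTm_conjT_apply, cF, Complex.star_def]
    have hk := k.isLt
    by_cases h : (j : ℕ) ≤ (k : ℕ)
    · rw [if_pos h, if_pos h, if_pos (by omega)]
    · rw [if_neg h, if_neg h, map_zero]
  rw [h1, h2]

/-- The regrouping equivalence. -/
def eqv (d : ℕ) :
    ((Fin (2*d) ⊕ Fin (2*d)) ⊕ (Fin (2*d) ⊕ Fin (2*d))) ≃ (Fin 4 × Fin (2*d)) where
  toFun x :=
    match x with
    | .inl (.inl a) => (0, a)
    | .inl (.inr a) => (2, a)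
    | .inr (.inl a) => (1, a)
    | .inr (.inr a) => (3, a)
  invFun p :=
    if p.1 = 0 then .inl (.inl p.2)
    else if p.1 = 1 then .inr (.inl p.2)
    else if p.1 = 2 then .inl (.inr p.2)
    else .inr (.inr p.2)
  left_inv := by
    rintro ((x | x) | (x | x)) <;> simp
  right_inv := by
    rintro ⟨p, x⟩
    fin_cases p <;> simp

lemma submatrix_big (d n : ℕ) (C : ℤ → ℂ) (hn : n ≤ d) (ε : ℂ) :
    (bigE0 d C + ε • bigEsharp d n C).submatrix (eqv d) (eqv d)
      = Matrix.fromBlocks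
          (Matrix.fromBlocks (LTm (2*d) (cF d (coeffC d C)))
            (ε • XR (2*d) n (d - n + d) (LTm (2*d) (cF d (coeffC d C)))ᴴ)
            (ε • XR (2*d) n (d - n) (LTm (2*d) (cF d (coeffC d C))))
            (LTm (2*d) (cF d (coeffC d C)))ᴴ)
          0 0
          (Matrix.fromBlocks (LTm (2*d) (cF d (coeffC d C)))
            (ε • XR (2*d) n (0 + d) (LTm (2*d) (cF d (coeffC d C)))ᴴ)
            (ε • XR (2*d) n 0 (LTm (2*d) (cF d (coeffC d C))))
            (LTm (2*d) (cF d (coeffC d C)))ᴴ) := by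
  have hT := e0_eq d C
  have hX1 := e2c_eq d n C hn
  have hY1 := Je1J_eq d n C hn
  have hX2 := e1c_eq d n C hn
  have hY2 := Je2J_eq d n C hn
  ext x y
  rcases x with (x | x) | (x | x) <;> rcases y with (y | y) | (y | y) <;>
    simp (config := { decide := true }) only [Matrix.submatrix_apply, eqv, Equiv.coe_fn_mk,
      Matrix.fromBlocks_apply₁₁, Matrix.fromBlocks_apply₁₂, Matrix.fromBlocks_apply₂₁,
      Matrix.fromBlocks_apply₂₂, Matrix.add_apply, Matrix.smul_apply, bigE0, bigEsharp,
      Matrix.of_apply, Matrix.zero_apply, smul_eq_mul, hT, hX1, hY1, hX2, hY2,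
      if_true, if_false, mul_zero, add_zero, zero_add] <;>
    try rfl

end SchurAux

/-- Lemma 3.5: `det(𝔈₀ + 𝔈ₙ^♯) = det(𝔈₀ − 𝔈ₙ^♯) = |C_{−L}|^{4(2d−n)}·D_n(𝒞)²`; in
particular `𝔈₀ ± 𝔈ₙ^♯` are invertible iff `D_n(𝒞) ≠ 0`. -/
theorem det_bigE0_add_bigEsharp
    (d : ℕ) (hd : 0 < d) (C : ℤ → ℂ) (hC : C (Lv d) * C (-(Lv d)) ≠ 0)
    (n : ℕ) (hn : n ≤ d) :
    (bigE0 d C + bigEsharp d n C).det = (bigE0 d C - bigEsharp d n C).det ∧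
    (bigE0 d C + bigEsharp d n C).det
      = ((‖C (-(Lv d))‖ : ℝ) : ℂ) ^ (4 * (2 * d - n)) * (SCD d C n) ^ 2 ∧
    (IsUnit (bigE0 d C + bigEsharp d n C) ↔ SCD d C n ≠ 0) ∧
    (IsUnit (bigE0 d C - bigEsharp d n C) ↔ SCD d C n ≠ 0) := by
  classical
  have hCne : C (-(Lv d)) ≠ 0 := by
    intro h0
    exact hC (by rw [h0, mul_zero])
  have had : coeffC d C d = C (-(Lv d)) := by
    unfold coeffC
    congr 1
    rw [SchurAux.rv_mul_d d]
    ring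
  have ha : coeffC d C d ≠ 0 := by rw [had]; exact hCne
  have main : ∀ ε : ℂ, ε * ε = 1 →
      (bigE0 d C + ε • bigEsharp d n C).det
        = ((coeffC d C d * star (coeffC d C d)) ^ (2*d - n)
            * (SCL (coeffC d C) d n 1).det) ^ 2 := by
    intro ε hε
    rw [← Matrix.det_submatrix_equiv_self (SchurAux.eqv d) (bigE0 d C + ε • bigEsharp d n C),
      SchurAux.submatrix_big d n C hn ε, Matrix.det_fromBlocks_zero₂₁,
      SchurAux.core d n hn (coeffC d C) ha (d - n) (by omega) ε hε,
      SchurAux.core d n hn (coeffC d C) ha 0 (by omega) ε hε,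
      ← SchurAux.SCL_eq d n hn (coeffC d C)]
    ring
  have hSCD : (SCL (coeffC d C) d n 1).det = SCD d C n := by
    unfold SCD
    by_cases h : n = 0
    · subst h
      rw [if_pos rfl, Matrix.det_isEmpty]
    · rw [if_neg h]
  have h1 := main 1 (by norm_num)
  rw [one_smul] at h1
  have hneg : bigE0 d C - bigEsharp d n C = bigE0 d C + (-1 : ℂ) • bigEsharp d n C := by
    rw [neg_one_smul, ← sub_eq_add_neg]
  have h2 := main (-1) (by norm_num)
  rw [← hneg] at h2
  have hz : (C (-(Lv d)) * star (C (-(Lv d))))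
      = ((‖C (-(Lv d))‖ : ℝ) : ℂ) ^ 2 := by
    rw [Complex.star_def, Complex.mul_conj]
    norm_cast
    rw [Complex.sq_norm]
  have hdetval : (bigE0 d C + bigEsharp d n C).det
      = ((‖C (-(Lv d))‖ : ℝ) : ℂ) ^ (4 * (2 * d - n)) * (SCD d C n) ^ 2 := by
    rw [h1, ← hSCD, had, hz, mul_pow, ← pow_mul, ← pow_mul,
      show 2 * ((2 * d - n) * 2) = 4 * (2 * d - n) by ring]
  have hdetval2 : (bigE0 d C - bigEsharp d n C).det
      = ((‖C (-(Lv d))‖ : ℝ) : ℂ) ^ (4 * (2 * d - n)) * (SCD d C n) ^ 2 := by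
    rw [h2, ← h1]
    exact hdetval
  have habs0 : ((‖C (-(Lv d))‖ : ℝ) : ℂ) ^ (4 * (2 * d - n)) ≠ 0 :=
    pow_ne_zero _ (Complex.ofReal_ne_zero.mpr (norm_ne_zero_iff.mpr hCne))
  refine ⟨by rw [hdetval, hdetval2], hdetval, ?_, ?_⟩
  · rw [Matrix.isUnit_iff_isUnit_det, hdetval, isUnit_iff_ne_zero, mul_ne_zero_iff]
    constructor
    · rintro ⟨-, hS⟩
      exact fun h0 => hS (by rw [h0]; ring)
    · intro hS
      exact ⟨habs0, pow_ne_zero _ hS⟩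
  · rw [Matrix.isUnit_iff_isUnit_det, hdetval2, isUnit_iff_ne_zero, mul_ne_zero_iff]
    constructor
    · rintro ⟨-, hS⟩
      exact fun h0 => hS (by rw [h0]; ring)
    · intro hS
      exact ⟨habs0, pow_ne_zero _ hS⟩


end
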